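/- Let θ > 0, T > 0, α > 0, a > 0, b ≥ 0, and define g(n) = a/n + b/√n on (0, ∞) and h(n, γ) = 2θT e^{2θnT} + (α/γ) g′(n) 2^{g(n)} ln 2 for n, γ > 0. Suppose 0 < γ < γ′ and n, n′ > 0 satisfy h(n, γ) = 0 and h(n′, γ′) = 0. Then n′ < n. That is, the stationary sampling interval is strictly decreasing in the channel-state SNR. -/
import Mathlib


/-- Core of Lemma 1 (finite AoI exponent): if the KKT stationarity condition
`h(n, γ) = 0` holds at SNRs `γ < γ'` with respective slot numbers `n, n' > 0`,
then `n' < n`; the stationary sampling interval strictly decreases in the SNR.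
Here `h(n, γ) = 2θT e^{2θnT} + (α/γ) g'(n) 2^{g(n)} ln 2` with
`g(n) = a/n + b/√n` and `g'(n) = -a/n² - b/(2 n^{3/2})`. -/
theorem stationary_sampling_interval_decreasing_in_snr
    (θ T α a b : ℝ) (hθ : 0 < θ) (hT : 0 < T) (hα : 0 < α) (ha : 0 < a)
    (hb : 0 ≤ b) (γ γ' n n' : ℝ) (hγ : 0 < γ) (hγγ' : γ < γ')
    (hn : 0 < n) (hn' : 0 < n')
    (hroot : 2 * θ * T * Real.exp (2 * θ * n * T) +
        (α / γ) * (-(a / n ^ 2) - b / (2 * n ^ ((3 : ℝ) / 2))) *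
          (2 : ℝ) ^ (a / n + b / Real.sqrt n) * Real.log 2 = 0)
    (hroot' : 2 * θ * T * Real.exp (2 * θ * n' * T) +
        (α / γ') * (-(a / n' ^ 2) - b / (2 * n' ^ ((3 : ℝ) / 2))) *
          (2 : ℝ) ^ (a / n' + b / Real.sqrt n') * Real.log 2 = 0) :
    n' < n := by
  have hγ' : (0 : ℝ) < γ' := hγ.trans hγγ'
  have hln : (0 : ℝ) < Real.log 2 := Real.log_pos one_lt_two
  -- abbreviations
  have e1 : γ * (2 * θ * T * Real.exp (2 * θ * n * T)) =
      α * (a / n ^ 2 + b / (2 * n ^ ((3 : ℝ) / 2))) *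
        (2 : ℝ) ^ (a / n + b / Real.sqrt n) * Real.log 2 := by
    have h := hroot
    field_simp at h ⊢
    linear_combination h
  have e2 : γ' * (2 * θ * T * Real.exp (2 * θ * n' * T)) =
      α * (a / n' ^ 2 + b / (2 * n' ^ ((3 : ℝ) / 2))) *
        (2 : ℝ) ^ (a / n' + b / Real.sqrt n') * Real.log 2 := by
    have h := hroot'
    field_simp at h ⊢
    linear_combination h
  by_contra hcon
  push_neg at hcon
  -- hcon : n ≤ n'
  have hP : a / n' ^ 2 + b / (2 * n' ^ ((3 : ℝ) / 2)) ≤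
      a / n ^ 2 + b / (2 * n ^ ((3 : ℝ) / 2)) := by
    gcongr
  have hg : a / n' + b / Real.sqrt n' ≤ a / n + b / Real.sqrt n := by
    gcongr
  have hX : (2 : ℝ) ^ (a / n' + b / Real.sqrt n') ≤
      (2 : ℝ) ^ (a / n + b / Real.sqrt n) :=
    Real.rpow_le_rpow_of_exponent_le one_le_two hg
  have hPpos : 0 < a / n' ^ 2 + b / (2 * n' ^ ((3 : ℝ) / 2)) := by
    have h1 : 0 < a / n' ^ 2 := by positivity
    have h2 : 0 ≤ b / (2 * n' ^ ((3 : ℝ) / 2)) := by positivity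
    linarith
  have hXpos : (0 : ℝ) < (2 : ℝ) ^ (a / n' + b / Real.sqrt n') := by positivity
  have step1 : α * (a / n' ^ 2 + b / (2 * n' ^ ((3 : ℝ) / 2))) *
        (2 : ℝ) ^ (a / n' + b / Real.sqrt n') * Real.log 2 ≤
      α * (a / n ^ 2 + b / (2 * n ^ ((3 : ℝ) / 2))) *
        (2 : ℝ) ^ (a / n + b / Real.sqrt n) * Real.log 2 := by
    gcongr
  have hF : Real.exp (2 * θ * n * T) ≤ Real.exp (2 * θ * n' * T) := by
    gcongr
  have hFpos : 0 < 2 * θ * T * Real.exp (2 * θ * n' * T) := by positivity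
  have step2 : γ * (2 * θ * T * Real.exp (2 * θ * n * T)) ≤
      γ * (2 * θ * T * Real.exp (2 * θ * n' * T)) := by
    gcongr
  have step3 : γ * (2 * θ * T * Real.exp (2 * θ * n' * T)) <
      γ' * (2 * θ * T * Real.exp (2 * θ * n' * T)) :=
    mul_lt_mul_of_pos_right hγγ' hFpos
  linarith [e1, e2, step1, step2, step3]
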